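/- Let μ ∈ ℕ_0^n be a multi-index with Σ_i μ_i = 2d having at least three odd entries. Then Δ^{d−1}(x^μ) = 0, where x^μ = Π_i x_i^{μ_i}. -/

import Mathlib

open MvPolynomial

/-- The Laplacian operator `Δ = ∑ i, ∂²/∂xᵢ²` on `ℝ[x₁,…,xₙ]`. -/
noncomputable def lap {n : ℕ} (p : MvPolynomial (Fin n) ℝ) : MvPolynomial (Fin n) ℝ :=
  ∑ i, pderiv i (pderiv i p)

lemma support_pderiv2 {n : ℕ} (i : Fin n) (p : MvPolynomial (Fin n) ℝ)
    {ν : Fin n →₀ ℕ} (hν : ν ∈ (pderiv i (pderiv i p)).support) :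
    ∃ ν' ∈ p.support, 2 ≤ ν' i ∧ ν = ν' - Finsupp.single i 1 - Finsupp.single i 1 := by
  classical
  have hp : p = ∑ ν' ∈ p.support, monomial ν' (coeff ν' p) := (as_sum p)
  rw [hp, map_sum, map_sum] at hν
  have := MvPolynomial.support_sum (s := p.support)
    (f := fun ν' => pderiv i (pderiv i (monomial ν' (coeff ν' p)))) hν
  obtain ⟨ν', hν', hmem⟩ := Finset.mem_biUnion.1 this
  refine ⟨ν', hν', ?_, ?_⟩
  · simp only [pderiv_monomial] at hmem
    have h1 := support_monomial_subset hmem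
    simp only [Finset.mem_singleton] at h1
    have h2 : (coeff ν' p * ((ν' i : ℕ) : ℝ) *
        (((ν' - Finsupp.single i 1 : Fin n →₀ ℕ) i : ℕ) : ℝ)) ≠ 0 := by
      intro h; rw [h] at hmem; simp at hmem
    have h3 : ν' i ≠ 0 := by
      intro h; apply h2; simp [h]
    have h4 : (ν' - Finsupp.single i 1 : Fin n →₀ ℕ) i ≠ 0 := by
      intro h; apply h2; simp [h]
    have h5 : (ν' - Finsupp.single i 1 : Fin n →₀ ℕ) i = ν' i - 1 := by
      simp [Finsupp.tsub_apply, Finsupp.single_eq_same]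
    omega
  · simp only [pderiv_monomial] at hmem
    have h1 := support_monomial_subset hmem
    simpa using h1

def Good {n : ℕ} (μ : Fin n → ℕ) (m : ℕ) (p : MvPolynomial (Fin n) ℝ) : Prop :=
  ∀ ν ∈ p.support, (∀ i, ν i % 2 = μ i % 2) ∧ ∑ i, ν i = m

lemma good_lap {n : ℕ} (μ : Fin n → ℕ) (m : ℕ) (p : MvPolynomial (Fin n) ℝ)
    (hp : Good μ (m + 2) p) : Good μ m (lap p) := by
  classical
  intro ν hν
  have hmem : ν ∈ (Finset.univ.biUnion fun i : Fin n =>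
      (pderiv i (pderiv i p)).support) := by
    have := MvPolynomial.support_sum (s := (Finset.univ : Finset (Fin n)))
      (f := fun i => pderiv i (pderiv i p)) hν
    simpa using this
  obtain ⟨i, -, hi⟩ := Finset.mem_biUnion.1 hmem
  obtain ⟨ν', hν', h2, rfl⟩ := support_pderiv2 i p hi
  obtain ⟨hpar, hdeg⟩ := hp ν' hν'
  have hval : ∀ j, ((ν' - Finsupp.single i 1 - Finsupp.single i 1 : Fin n →₀ ℕ) j)
      = ν' j - (if j = i then 2 else 0) := by
    intro j
    by_cases h : j = i
    · subst h
      simp only [Finsupp.tsub_apply, Finsupp.single_eq_same, if_true]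
      omega
    · simp only [Finsupp.tsub_apply, Finsupp.single_eq_of_ne' (fun h' => h h'.symm),
        if_neg h, Nat.sub_zero]
  constructor
  · intro j
    rw [hval j]
    have hpj := hpar j
    by_cases h : j = i
    · subst h; rw [if_pos rfl]; omega
    · simp only [if_neg h, Nat.sub_zero]; exact hpj
  · have : ∀ j, ((ν' - Finsupp.single i 1 - Finsupp.single i 1 : Fin n →₀ ℕ) j)
        + (if j = i then 2 else 0) = ν' j := by
      intro j; rw [hval j]; split <;> [skip; omega]
      · subst ‹j = i›; omega
    have hsum2 : (∑ j, (((ν' - Finsupp.single i 1 - Finsupp.single i 1 : Fin n →₀ ℕ) j)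
        + (if j = i then 2 else 0))) = ∑ j, ν' j := Finset.sum_congr rfl fun j _ => this j
    rw [Finset.sum_add_distrib, Finset.sum_ite_eq' Finset.univ i (fun _ => 2),
      if_pos (Finset.mem_univ i)] at hsum2
    omega

/-- **Statement 6.** If `μ ∈ ℕ₀ⁿ` sums to `2d` and has at least three odd entries, then
`Δ^{d−1}(xᵘ) = 0`. -/
theorem stmt6 {n d : ℕ} (μ : Fin n → ℕ) (hsum : ∑ i, μ i = 2 * d)
    (hodd : 3 ≤ (Finset.univ.filter fun i => Odd (μ i)).card) :
    lap^[d - 1] (∏ i, (X i : MvPolynomial (Fin n) ℝ) ^ μ i) = 0 := by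
  classical
  set ν₀ : Fin n →₀ ℕ := Finsupp.equivFunOnFinite.symm μ with hν₀
  have hν₀app : ∀ i, ν₀ i = μ i := fun i => rfl
  have hmono : (∏ i, (X i : MvPolynomial (Fin n) ℝ) ^ μ i) = monomial ν₀ 1 := by
    rw [← prod_X_pow_eq_monomial]
    refine (Finset.prod_subset (Finset.subset_univ _) ?_).symm
    intro x _ hx
    have h0 : ν₀ x = 0 := by simpa using hx
    rw [show μ x = 0 from h0, pow_zero]
  -- d ≥ 2
  have hd2 : 2 ≤ d := by
    by_contra h
    have hcard : (Finset.univ.filter fun i => Odd (μ i)).card ≤ ∑ i, μ i := by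
      calc (Finset.univ.filter fun i => Odd (μ i)).card
          = ∑ i ∈ Finset.univ.filter fun i => Odd (μ i), 1 := by simp
        _ ≤ ∑ i ∈ Finset.univ.filter fun i => Odd (μ i), μ i :=
            Finset.sum_le_sum fun i hi => (Finset.mem_filter.1 hi).2.pos
        _ ≤ ∑ i, μ i := Finset.sum_le_sum_of_subset (Finset.filter_subset _ _)
    omega
  have key : ∀ k, Good μ (2 * d - 2 * k) (lap^[k] (∏ i, (X i : MvPolynomial (Fin n) ℝ) ^ μ i))
      ∨ lap^[k] (∏ i, (X i : MvPolynomial (Fin n) ℝ) ^ μ i) = 0 := by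
    intro k
    induction k with
    | zero =>
      left
      rw [Function.iterate_zero_apply, hmono]
      intro ν hν
      have : ν = ν₀ := by
        have := support_monomial_subset hν
        simpa using this
      subst this
      constructor
      · intro i; rw [hν₀app]
      · simpa [hν₀app] using hsum
    | succ k ih =>
      rcases ih with ih | ih
      · by_cases hk : k + 1 ≤ d
        · left
          rw [Function.iterate_succ_apply']
          have : 2 * d - 2 * k = (2 * d - 2 * (k + 1)) + 2 := by omega
          rw [this] at ih
          exact good_lap μ _ _ ih
        · -- degree already ≤ small; but we only need k ≤ d-1 cases; otherwise show 0
          right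
          rw [Function.iterate_succ_apply']
          -- from ih: all monomials have degree 2*d - 2*k = 0 since k ≥ d... then sum = 0 but
          -- three odd entries forces no monomials, so the polynomial is 0 already
          have h0 : lap^[k] (∏ i, (X i : MvPolynomial (Fin n) ℝ) ^ μ i) = 0 := by
            by_contra hne
            obtain ⟨ν, hν⟩ := Finset.nonempty_of_ne_empty
              (fun hemp => hne (MvPolynomial.support_eq_empty.1 hemp))
            obtain ⟨hpar, hdeg⟩ := ih ν hν
            have hbound : 3 ≤ ∑ i, ν i := by
              calc (3 : ℕ) ≤ (Finset.univ.filter fun i => Odd (μ i)).card := hodd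
                _ = ∑ i ∈ Finset.univ.filter fun i => Odd (μ i), 1 := by simp
                _ ≤ ∑ i ∈ Finset.univ.filter fun i => Odd (μ i), ν i := by
                    refine Finset.sum_le_sum fun i hi => ?_
                    have := (Finset.mem_filter.1 hi).2
                    have hp := hpar i
                    rcases this with ⟨t, ht⟩
                    omega
                _ ≤ ∑ i, ν i := Finset.sum_le_sum_of_subset (Finset.filter_subset _ _)
            omega
          rw [h0]
          simp [lap]
      · right
        rw [Function.iterate_succ_apply', ih]
        simp [lap]
  rcases key (d - 1) with h | h
  · by_contra hne
    obtain ⟨ν, hν⟩ := Finset.nonempty_of_ne_empty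
      (fun hemp => hne (MvPolynomial.support_eq_empty.1 hemp))
    obtain ⟨hpar, hdeg⟩ := h ν hν
    have hdeg2 : 2 * d - 2 * (d - 1) = 2 := by omega
    rw [hdeg2] at hdeg
    have hbound : 3 ≤ ∑ i, ν i := by
      calc (3 : ℕ) ≤ (Finset.univ.filter fun i => Odd (μ i)).card := hodd
        _ = ∑ i ∈ Finset.univ.filter fun i => Odd (μ i), 1 := by simp
        _ ≤ ∑ i ∈ Finset.univ.filter fun i => Odd (μ i), ν i := by
            refine Finset.sum_le_sum fun i hi => ?_
            have := (Finset.mem_filter.1 hi).2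
            have hp := hpar i
            rcases this with ⟨t, ht⟩
            omega
        _ ≤ ∑ i, ν i := Finset.sum_le_sum_of_subset (Finset.filter_subset _ _)
    omega
  · exact h
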